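/- Let δ > 0, c₁, c₂ > 0 and ρ₁, ρ₂ ∈ ℝ. Suppose that 2(ρ₁ + ρ₂) + c₁ + c₂ + c₁·exp(−(2ρ₁ + c₁)δ) + c₂·exp(−(2ρ₂ + c₂)δ) < 0. Let λ₁ be the unique root of λ + c₁·exp(δλ) = −2ρ₁ − c₁ and λ₂ the unique root of λ + c₂·exp(δλ) = −2ρ₂ − c₂. Then λ₁ + λ₂ > 0; consequently there exists ρ ∈ ℝ such that ρ + λ₁ > 0 and −ρ + λ₂ > 0. -/
import Mathlib


open Real

theorem stmt3 (δ c₁ c₂ ρ₁ ρ₂ l₁ l₂ : ℝ)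
    (hδ : 0 < δ) (hc₁ : 0 < c₁) (hc₂ : 0 < c₂)
    (hL : 2 * (ρ₁ + ρ₂) + c₁ + c₂ + c₁ * Real.exp (-(2 * ρ₁ + c₁) * δ)
        + c₂ * Real.exp (-(2 * ρ₂ + c₂) * δ) < 0)
    (h1 : l₁ + c₁ * Real.exp (δ * l₁) = -2 * ρ₁ - c₁)
    (h2 : l₂ + c₂ * Real.exp (δ * l₂) = -2 * ρ₂ - c₂) :
    0 < l₁ + l₂ ∧ ∃ ρ : ℝ, 0 < ρ + l₁ ∧ 0 < -ρ + l₂ := by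
  set a₁ : ℝ := -2 * ρ₁ - c₁ with ha₁
  set a₂ : ℝ := -2 * ρ₂ - c₂ with ha₂
  have e1 : -(2 * ρ₁ + c₁) * δ = δ * a₁ := by rw [ha₁]; ring
  have e2 : -(2 * ρ₂ + c₂) * δ = δ * a₂ := by rw [ha₂]; ring
  rw [e1, e2] at hL
  have hl1 : l₁ < a₁ := by
    have := mul_pos hc₁ (Real.exp_pos (δ * l₁)); linarith
  have hl2 : l₂ < a₂ := by
    have := mul_pos hc₂ (Real.exp_pos (δ * l₂)); linarith
  have he1 : Real.exp (δ * l₁) < Real.exp (δ * a₁) :=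
    Real.exp_lt_exp.mpr (by nlinarith)
  have he2 : Real.exp (δ * l₂) < Real.exp (δ * a₂) :=
    Real.exp_lt_exp.mpr (by nlinarith)
  have key : 0 < l₁ + l₂ := by nlinarith
  refine ⟨key, (l₂ - l₁) / 2, by linarith, by linarith⟩
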